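/- arXiv:2012.10084 — 5 statements merged into one kernel-verified Lean document; each statement's English description precedes it below -/
import Mathlib

section
/- Wavelength continuity / lightpath existence for an integral solution: fix ω ∈ Ω, a node pair (s, d) with s ≠ d, and f : A(ω) → {0, 1} such that Σ_{ℓ∈δ⁺(v)∩A(ω)} f(ℓ) = Σ_{ℓ∈δ⁻(v)∩A(ω)} f(ℓ) for every v ∈ V with v ≠ s and v ≠ d, f(ℓ) = 0 for every ℓ ∈ δ⁻(s) ∩ A(ω) and every ℓ ∈ δ⁺(d) ∩ A(ω), and Σ_{ℓ∈δ⁺(s)∩A(ω)} f(ℓ) ≥ 1. Then there exists a directed trail from s to d all of whose links belong to A(ω) and carry f(ℓ) = 1; i.e., the flow-conservation and loop-elimination constraints set up a proper lightpath on the single wavelength ω for a granted request. -/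
open Finset

variable {V L W : Type*} [Fintype V] [DecidableEq V] [Fintype L] [DecidableEq L]
  [Fintype W] [DecidableEq W]

/-- A directed trail from `s` to `d`: a nonempty list of pairwise distinct links,
consecutive links being head-to-tail compatible, starting at `s` and ending at `d`. -/
def IsDiTrail (tl hd : L → V) (s d : V) (t : List L) : Prop :=
  t.Nodup ∧ List.Chain' (fun a b => hd a = tl b) t ∧
    ∃ h : t ≠ [], tl (t.head h) = s ∧ hd (t.getLast h) = d

lemma chain_count {V L : Type*} [DecidableEq V] (tl hd : L → V) :
    ∀ (t : List L), List.Chain' (fun a b => hd a = tl b) t → ∀ u : V,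
      t.countP (fun e => tl e = u) + (t.getLast?.elim 0 fun e => if u = hd e then 1 else 0)
        = t.countP (fun e => hd e = u) + (t.head?.elim 0 fun e => if u = tl e then 1 else 0) := by
  intro t
  induction t with
  | nil => simp
  | cons e rest ih =>
    intro hch u
    cases rest with
    | nil =>
      simp only [List.countP_cons, List.countP_nil, List.getLast?_singleton,
        List.head?_cons, Option.elim_some]
      by_cases h1 : tl e = u <;> by_cases h2 : hd e = u <;>
        simp [h1, h2, Ne.symm, eq_comm]
    | cons e' rest' =>
      rw [List.Chain', List.isChain_cons_cons] at hch
      have IH := ih hch.2 u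
      have he : hd e = tl e' := hch.1
      simp only [List.countP_cons, List.getLast?_cons_cons, List.head?_cons,
        Option.elim_some] at *
      have c1 : (if decide (tl e = u) = true then (1:ℕ) else 0) = (if u = tl e then 1 else 0) := by
        simp [eq_comm]
      have c2 : (if decide (hd e = u) = true then (1:ℕ) else 0) = (if u = hd e then 1 else 0) := by
        simp [eq_comm]
      rw [c1, c2, ← he] at *
      omega

lemma fresh_edge {V L : Type*} [DecidableEq V] [DecidableEq L] (tl hd : L → V)
    (S : Finset L) (s d : V)
    (hcard : ∀ v, v ≠ s → v ≠ d →
      (S.filter (fun e => tl e = v)).card = (S.filter (fun e => hd e = v)).card)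
    (hnos : ∀ e ∈ S, hd e ≠ s)
    (t : List L) (hnd : t.Nodup) (hch : List.Chain' (fun a b => hd a = tl b) t)
    (hmem : ∀ e ∈ t, e ∈ S) (h : t ≠ []) (hhead : tl (t.head h) = s)
    (hvd : hd (t.getLast h) ≠ d) :
    ∃ e ∈ S, e ∉ t ∧ tl e = hd (t.getLast h) := by
  set v := hd (t.getLast h) with hv
  have hvs : v ≠ s := hnos _ (hmem _ (List.getLast_mem h))
  have hc := chain_count tl hd t hch v
  rw [List.getLast?_eq_getLast h, List.head?_eq_head h] at hc
  simp only [Option.elim_some, hhead, ← hv, if_pos rfl, if_neg hvs, if_true] at hc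
  have hsub : (t.filter (fun e => decide (tl e = v))).toFinset ⊆
      S.filter (fun e => tl e = v) := by
    intro e he
    simp only [List.mem_toFinset, List.mem_filter, decide_eq_true_eq] at he
    exact Finset.mem_filter.2 ⟨hmem _ he.1, he.2⟩
  have h2 : (t.filter (fun e => decide (tl e = v))).toFinset.card =
      t.countP (fun e => tl e = v) := by
    rw [List.toFinset_card_of_nodup (hnd.filter _), ← List.countP_eq_length_filter]
  have hsub2 : (t.filter (fun e => decide (hd e = v))).toFinset ⊆
      S.filter (fun e => hd e = v) := by
    intro e he
    simp only [List.mem_toFinset, List.mem_filter, decide_eq_true_eq] at he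
    exact Finset.mem_filter.2 ⟨hmem _ he.1, he.2⟩
  have h4 : t.countP (fun e => hd e = v) ≤ (S.filter (fun e => hd e = v)).card := by
    have := Finset.card_le_card hsub2
    rwa [List.toFinset_card_of_nodup (hnd.filter _), ← List.countP_eq_length_filter] at this
  rw [← hcard v hvs hvd] at h4
  have hlt : (t.filter (fun e => decide (tl e = v))).toFinset.card <
      (S.filter (fun e => tl e = v)).card := by omega
  have hne : ((S.filter (fun e => tl e = v)) \ (t.filter (fun e => decide (tl e = v))).toFinset).Nonempty :=
    Finset.sdiff_nonempty.2 fun hsub' => absurd (Finset.card_le_card hsub') (not_le.2 hlt)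
  obtain ⟨e, hemem⟩ := hne
  obtain ⟨heS, hent⟩ := Finset.mem_sdiff.1 hemem
  rw [Finset.mem_filter] at heS
  refine ⟨e, heS.1, ?_, heS.2⟩
  intro hmem'
  exact hent (by simp [List.mem_toFinset, List.mem_filter, hmem', heS.2])

lemma trail_extend {V L : Type*} [Fintype V] [DecidableEq V] [Fintype L] [DecidableEq L] (tl hd : L → V)
    (S : Finset L) (s d : V)
    (hcard : ∀ v, v ≠ s → v ≠ d →
      (S.filter (fun e => tl e = v)).card = (S.filter (fun e => hd e = v)).card)
    (hnos : ∀ e ∈ S, hd e ≠ s) :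
    ∀ (n : ℕ) (t : List L), t.Nodup → List.Chain' (fun a b => hd a = tl b) t →
      (∀ e ∈ t, e ∈ S) → ∀ (h : t ≠ []), tl (t.head h) = s → S.card ≤ t.length + n →
      ∃ t' : List L, IsDiTrail tl hd s d t' ∧ ∀ e ∈ t', e ∈ S := by
  intro n
  induction n with
  | zero =>
    intro t hnd hch hmem h hhead hlen
    by_cases hvd : hd (t.getLast h) = d
    · exact ⟨t, ⟨hnd, hch, h, hhead, hvd⟩, hmem⟩
    · exfalso
      obtain ⟨e, heS, hent, -⟩ := fresh_edge tl hd S s d hcard hnos t hnd hch hmem h hhead hvd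
      have hsub : insert e t.toFinset ⊆ S := by
        intro x hx
        rcases Finset.mem_insert.1 hx with rfl | hx
        · exact heS
        · exact hmem _ (List.mem_toFinset.1 hx)
      have := Finset.card_le_card hsub
      rw [Finset.card_insert_of_notMem (by simpa using hent),
        List.toFinset_card_of_nodup hnd] at this
      omega
  | succ n ih =>
    intro t hnd hch hmem h hhead hlen
    by_cases hvd : hd (t.getLast h) = d
    · exact ⟨t, ⟨hnd, hch, h, hhead, hvd⟩, hmem⟩
    · obtain ⟨e, heS, hent, hetl⟩ :=
        fresh_edge tl hd S s d hcard hnos t hnd hch hmem h hhead hvd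
      have h' : t ++ [e] ≠ [] := by simp
      refine ih (t ++ [e]) ?_ ?_ ?_ h' ?_ ?_
      · simp [List.nodup_append, hnd, hent]; rintro a ha rfl; exact hent ha
      · refine List.IsChain.append hch (List.isChain_singleton e) ?_
        intro x hx y hy
        rw [List.getLast?_eq_getLast h, Option.mem_some_iff] at hx
        simp only [List.head?_cons, Option.mem_some_iff] at hy
        subst hx; subst hy
        exact hetl.symm
      · intro x hx
        rcases List.mem_append.1 hx with hx | hx
        · exact hmem _ hx
        · simp only [List.mem_singleton] at hx; subst hx; exact heS
      · rw [List.head_append_of_ne_nil h]  -- maybe wrong name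
        exact hhead
      · simp only [List.length_append, List.length_singleton]
        omega

/-- Wavelength continuity / lightpath existence for an integral solution: a `0/1`
single-wavelength flow that is conserved away from `s` and `d`, avoids links into the
source and out of the destination, and pushes at least one unit out of the source,
contains a directed trail from `s` to `d` consisting of available wavelinks carrying
value `1`, i.e., a proper lightpath on the wavelength `ω`. -/
theorem lightpath_existence
    (tl hd : L → V) (A : W → Finset L) (ω : W) (s d : V) (hsd : s ≠ d)
    (f : L → ℝ)
    (hf01 : ∀ ℓ ∈ A ω, f ℓ = 0 ∨ f ℓ = 1)
    (hcons : ∀ v : V, v ≠ s → v ≠ d →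
      ∑ ℓ ∈ (A ω).filter (fun ℓ => tl ℓ = v), f ℓ =
      ∑ ℓ ∈ (A ω).filter (fun ℓ => hd ℓ = v), f ℓ)
    (hins : ∀ ℓ ∈ A ω, hd ℓ = s → f ℓ = 0)
    (houtd : ∀ ℓ ∈ A ω, tl ℓ = d → f ℓ = 0)
    (hpos : 1 ≤ ∑ ℓ ∈ (A ω).filter (fun ℓ => tl ℓ = s), f ℓ) :
    ∃ t : List L, IsDiTrail tl hd s d t ∧ ∀ ℓ ∈ t, ℓ ∈ A ω ∧ f ℓ = 1 := by
  classical
  set S : Finset L := (A ω).filter (fun ℓ => f ℓ = 1) with hS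
  have hsum : ∀ (P : L → Prop) [DecidablePred P],
      ∑ ℓ ∈ (A ω).filter P, f ℓ = ((S.filter P).card : ℝ) := by
    intro P _
    have h1 : ∑ ℓ ∈ (A ω).filter P, f ℓ
        = ∑ ℓ ∈ (A ω).filter P, (if f ℓ = 1 then (1:ℝ) else 0) := by
      refine Finset.sum_congr rfl fun ℓ hℓ => ?_
      rcases hf01 ℓ (Finset.mem_filter.1 hℓ).1 with h | h <;> simp [h]
    rw [h1, Finset.sum_boole]
    congr 1
    rw [hS, Finset.filter_filter, Finset.filter_filter]
    exact congrArg Finset.card (Finset.filter_congr fun ℓ _ => and_comm)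
  have hcard : ∀ v, v ≠ s → v ≠ d →
      (S.filter (fun e => tl e = v)).card = (S.filter (fun e => hd e = v)).card := by
    intro v hvs hvd
    have := hcons v hvs hvd
    rw [hsum, hsum] at this
    exact_mod_cast this
  have hnos : ∀ e ∈ S, hd e ≠ s := by
    intro e heS hes
    have h1 := Finset.mem_filter.1 heS
    exact one_ne_zero (h1.2 ▸ hins e h1.1 hes)
  -- initial edge
  have hpos' : (1:ℝ) ≤ ((S.filter (fun e => tl e = s)).card : ℝ) := by
    rwa [hsum] at hpos
  have hpos'' : 0 < (S.filter (fun e => tl e = s)).card := by exact_mod_cast lt_of_lt_of_le zero_lt_one hpos'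
  obtain ⟨e0, he0⟩ := Finset.card_pos.1 hpos''
  obtain ⟨he0S, he0tl⟩ := Finset.mem_filter.1 he0
  obtain ⟨t, ht, hts⟩ := trail_extend tl hd S s d hcard hnos S.card [e0]
    (List.nodup_singleton e0) (List.isChain_singleton e0)
    (by intro e he; simp only [List.mem_singleton] at he; subst he; exact he0S)
    (by simp) (by simpa using he0tl) (by simp)
  exact ⟨t, ht, fun ℓ hℓ => Finset.mem_filter.1 (hts ℓ hℓ)⟩
end

section
/- Correctness of the RWA formulation — every first-stage feasible integral assignment yields a valid provisioning: let SD ⊆ V × V be a finite set of node pairs (each with s ≠ d), r̄ : SD → ℕ, and let x ∈ Feas(SD). For each (s, d) ∈ SD put k_{(s,d)} = Σ_{ω∈Ω} Σ_{ℓ∈δ⁺(s)∩A(ω)} x_{ℓ,ω}^{(s,d)}. Then k_{(s,d)} ≤ r̄(s, d) for every (s, d) ∈ SD, and there exists a family of lightpaths containing, for each (s, d) ∈ SD, exactly k_{(s,d)} lightpaths serving (s, d), where each lightpath serving (s, d) is a pair (p, ω) of a wavelength ω ∈ Ω and a directed trail p from s to d whose links all lie in A(ω) and satisfy x_{ℓ,ω}^{(s,d)}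 = 1, and such that no two distinct lightpaths of the whole family (including lightpaths serving different node pairs) share a wavelink (ℓ, ω); i.e., the provisioning respects wavelength continuity and has no wavelength conflicts. -/
open Finset

variable {V L W : Type*} [Fintype V] [DecidableEq V] [Fintype L] [DecidableEq L]
  [Fintype W] [DecidableEq W]

/-- First-stage feasibility `x ∈ Feas(SD)` of the RWA formulation: binary variables,
clash constraints, flow conservation, loop elimination and demand bounds. -/
def FeasSD (tl hd : L → V) (A : W → Finset L) (SD : Finset (V × V))
    (rbar : V × V → ℕ) (x : V × V → W → L → ℝ) : Prop :=
  (∀ p ∈ SD, ∀ ω : W, ∀ ℓ ∈ A ω, x p ω ℓ = 0 ∨ x p ω ℓ = 1) ∧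
  (∀ ω : W, ∀ ℓ ∈ A ω, ∑ p ∈ SD, x p ω ℓ ≤ 1) ∧
  (∀ ω : W, ∀ p ∈ SD, ∀ v : V, v ≠ p.1 → v ≠ p.2 →
      ∑ ℓ ∈ (A ω).filter (fun ℓ => tl ℓ = v), x p ω ℓ =
      ∑ ℓ ∈ (A ω).filter (fun ℓ => hd ℓ = v), x p ω ℓ) ∧
  (∀ p ∈ SD, ∑ ω : W, ∑ ℓ ∈ (A ω).filter (fun ℓ => hd ℓ = p.1), x p ω ℓ = 0) ∧
  (∀ p ∈ SD, ∑ ω : W, ∑ ℓ ∈ (A ω).filter (fun ℓ => tl ℓ = p.2), x p ω ℓ = 0) ∧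
  (∀ p ∈ SD, ∑ ω : W, ∑ ℓ ∈ (A ω).filter (fun ℓ => tl ℓ = p.1), x p ω ℓ ≤ (rbar p : ℝ))

set_option linter.unusedSectionVars false

private lemma card_filter_sdiff (E : Finset L) (t : List L) (hnd : t.Nodup)
    (hsub : ∀ ℓ ∈ t, ℓ ∈ E) (p : L → Prop) [DecidablePred p] :
    ((E \ t.toFinset).filter p).card + t.countP (fun ℓ => decide (p ℓ)) =
      (E.filter p).card := by
  have h1 : (E \ t.toFinset).filter p = (E.filter p) \ (t.toFinset.filter p) := by
    ext ℓ
    simp only [Finset.mem_filter, Finset.mem_sdiff, List.mem_toFinset]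
    tauto
  have h2 : t.toFinset.filter p ⊆ E.filter p :=
    Finset.filter_subset_filter _ (fun ℓ hℓ => hsub ℓ (List.mem_toFinset.1 hℓ))
  have h3 : (t.toFinset.filter p).card = t.countP (fun ℓ => decide (p ℓ)) := by
    have h4 : t.toFinset.filter p = (t.filter (fun ℓ => decide (p ℓ))).toFinset := by
      ext ℓ
      simp [List.mem_filter]
    rw [h4, List.toFinset_card_of_nodup (hnd.filter _), List.countP_eq_length_filter]
  rw [h1, Finset.card_sdiff_of_subset h2, h3]
  have := Finset.card_le_card h2
  omega
private lemma card_filter_erase' (E : Finset L) (e : L) (he : e ∈ E)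
    (p : L → Prop) [DecidablePred p] :
    ((E.erase e).filter p).card + (if p e then 1 else 0) = (E.filter p).card := by
  rw [Finset.filter_erase]
  by_cases h : p e
  · rw [if_pos h, Finset.card_erase_of_mem (Finset.mem_filter.2 ⟨he, h⟩)]
    have : 0 < (E.filter p).card :=
      Finset.card_pos.2 ⟨e, Finset.mem_filter.2 ⟨he, h⟩⟩
    omega
  · rw [if_neg h, Finset.erase_eq_of_notMem (fun hm => h (Finset.mem_filter.1 hm).2),
      add_zero]

private lemma extract_trail (tl hd : L → V) (s d : V) :
    ∀ (n : ℕ) (E : Finset L), E.card ≤ n →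
    E.filter (fun ℓ => hd ℓ = s) = ∅ →
    E.filter (fun ℓ => tl ℓ = d) = ∅ →
    ∀ v, v ≠ d →
    (∀ w, w ≠ s → w ≠ d → w ≠ v →
      (E.filter (fun ℓ => tl ℓ = w)).card = (E.filter (fun ℓ => hd ℓ = w)).card) →
    ((v = s ∧ 1 ≤ (E.filter (fun ℓ => tl ℓ = v)).card) ∨ (v ≠ s ∧
      (E.filter (fun ℓ => tl ℓ = v)).card = (E.filter (fun ℓ => hd ℓ = v)).card + 1)) →
    ∃ t : List L, t.Nodup ∧ List.Chain' (fun a b => hd a = tl b) t ∧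
      ∃ h : t ≠ [], tl (t.head h) = v ∧ hd (t.getLast h) = d ∧ ∀ ℓ ∈ t, ℓ ∈ E := by
  intro n
  induction n with
  | zero =>
    intro E hE _ _ v _ _ hv
    have : E = ∅ := Finset.card_eq_zero.1 (Nat.le_zero.1 hE)
    subst this
    simp only [Finset.filter_empty, Finset.card_empty] at hv
    omega
  | succ n ih =>
    intro E hE hs hd' v hvd cons hv
    have hpos : 0 < (E.filter (fun ℓ => tl ℓ = v)).card := by
      rcases hv with ⟨_, h⟩ | ⟨_, h⟩ <;> omega
    obtain ⟨e, hef⟩ := Finset.card_pos.1 hpos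
    obtain ⟨he, hev⟩ := Finset.mem_filter.1 hef
    set u := hd e with hu
    have hus : u ≠ s := by
      intro h
      have : e ∈ E.filter (fun ℓ => hd ℓ = s) := Finset.mem_filter.2 ⟨he, h⟩
      rw [hs] at this; exact absurd this (Finset.notMem_empty e)
    by_cases hud : u = d
    · refine ⟨[e], by simp, List.isChain_singleton _, by simp, ?_⟩
      simp [hev, hud.symm, he, hu]
    · -- recurse on E.erase e
      have hcard : (E.erase e).card ≤ n := by
        rw [Finset.card_erase_of_mem he]
        omega
      have hs' : (E.erase e).filter (fun ℓ => hd ℓ = s) = ∅ := by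
        rw [Finset.filter_erase, hs]; simp
      have hd'' : (E.erase e).filter (fun ℓ => tl ℓ = d) = ∅ := by
        rw [Finset.filter_erase, hd']; simp
      have cons' : ∀ w, w ≠ s → w ≠ d → w ≠ u →
          ((E.erase e).filter (fun ℓ => tl ℓ = w)).card =
          ((E.erase e).filter (fun ℓ => hd ℓ = w)).card := by
        intro w hws hwd hwu
        have h1 := card_filter_erase' E e he (fun ℓ => tl ℓ = w)
        have h2 := card_filter_erase' E e he (fun ℓ => hd ℓ = w)
        rw [if_neg (fun h : hd e = w => hwu ((hu.trans h).symm))] at h2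
        by_cases hwv : w = v
        · subst hwv
          rcases hv with ⟨rfl, _⟩ | ⟨_, heq⟩
          · exact absurd rfl hws
          · rw [if_pos (hev.trans rfl)] at h1
            omega
        · have := cons w hws hwd hwv
          rw [if_neg (fun h : tl e = w => hwv (h.symm.trans hev))] at h1
          omega
      have hv' : (u = s ∧ 1 ≤ ((E.erase e).filter (fun ℓ => tl ℓ = u)).card) ∨ (u ≠ s ∧
          ((E.erase e).filter (fun ℓ => tl ℓ = u)).card =
          ((E.erase e).filter (fun ℓ => hd ℓ = u)).card + 1) := by
        refine Or.inr ⟨hus, ?_⟩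
        have h1 := card_filter_erase' E e he (fun ℓ => tl ℓ = u)
        have h2 := card_filter_erase' E e he (fun ℓ => hd ℓ = u)
        rw [if_pos rfl] at h2
        by_cases huv : u = v
        · rcases hv with ⟨rfl, _⟩ | ⟨_, heq⟩
          · exact absurd huv hus
          · rw [if_pos (show tl e = u from huv ▸ hev)] at h1
            rw [huv] at h1 h2 ⊢
            omega
        · have := cons u hus hud huv
          rw [if_neg (fun h : tl e = u => huv ((h ▸ hev : u = v)))] at h1
          omega
      obtain ⟨t', tnd, tch, tne, thead, tlast, tmem⟩ :=
        ih (E.erase e) hcard hs' hd'' u hud cons' hv'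
      have hent : e ∉ t' := fun h => Finset.notMem_erase e E (tmem e h)
      refine ⟨e :: t', List.nodup_cons.2 ⟨hent, tnd⟩, ?_, by simp, ?_, ?_, ?_⟩
      · refine List.isChain_cons.2 ?_
        refine ⟨fun y hy => ?_, tch⟩
        rw [List.head?_eq_head tne, Option.mem_some_iff] at hy
        rw [hy] at thead
        rw [thead, hu]
      · simpa using hev
      · rw [List.getLast_cons tne]; exact tlast
      · intro ℓ hℓ
        rcases List.mem_cons.1 hℓ with rfl | h
        · exact he
        · exact Finset.mem_of_mem_erase (tmem ℓ h)
private lemma trail_count (tl hd : L → V) (s d : V) :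
    ∀ (t : List L) (a : V), List.Chain' (fun x y => hd x = tl y) t →
    ∀ (h : t ≠ []), tl (t.head h) = a → hd (t.getLast h) = d →
    (∀ ℓ ∈ t, hd ℓ ≠ s ∧ tl ℓ ≠ d) →
    ∀ v, t.countP (fun ℓ => decide (tl ℓ = v)) + (if v = d then 1 else 0) =
      t.countP (fun ℓ => decide (hd ℓ = v)) + (if v = a then 1 else 0) := by
  intro t
  induction t with
  | nil => intro a _ h; exact absurd rfl h
  | cons e rest ih =>
    intro a hch h hhead hlast hmem v
    have e1 : (if tl e = v then 1 else 0 : ℕ) = (if v = tl e then 1 else 0) :=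
      if_congr eq_comm rfl rfl
    by_cases hr : rest = []
    · subst hr
      simp only [List.head_cons] at hhead
      simp only [List.getLast_singleton] at hlast
      simp only [List.countP_cons, List.countP_nil, decide_eq_true_eq]
      subst hhead
      have e2 : (if hd e = v then 1 else 0 : ℕ) = (if v = d then 1 else 0) :=
        if_congr (by rw [hlast]; exact eq_comm) rfl rfl
      rw [e1, e2]; ring
    · have hch' := (List.isChain_cons.1 hch)
      have hhd : hd e = tl (rest.head hr) := by
        exact hch'.1 (rest.head hr)
          (by rw [List.head?_eq_head hr]; exact Option.mem_some_iff.2 rfl)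
      have hlast' : hd (rest.getLast hr) = d := by
        rw [List.getLast_cons hr] at hlast; exact hlast
      have hih := ih (hd e) hch'.2 hr hhd.symm hlast'
        (fun ℓ hℓ => hmem ℓ (List.mem_cons_of_mem e hℓ)) v
      simp only [List.head_cons] at hhead
      simp only [List.countP_cons, decide_eq_true_eq]
      subst hhead
      have e2 : (if hd e = v then 1 else 0 : ℕ) = (if v = hd e then 1 else 0) :=
        if_congr eq_comm rfl rfl
      rw [e1, e2]
      generalize (if v = d then 1 else 0 : ℕ) = q at hih ⊢
      generalize (if v = hd e then 1 else 0 : ℕ) = y at hih ⊢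
      generalize (if v = tl e then 1 else 0 : ℕ) = z at hih ⊢
      omega
private lemma decompose (tl hd : L → V) (s d : V) (hsd : s ≠ d) :
    ∀ (m : ℕ) (E : Finset L),
    E.filter (fun ℓ => hd ℓ = s) = ∅ →
    E.filter (fun ℓ => tl ℓ = d) = ∅ →
    (∀ w, w ≠ s → w ≠ d →
      (E.filter (fun ℓ => tl ℓ = w)).card = (E.filter (fun ℓ => hd ℓ = w)).card) →
    (E.filter (fun ℓ => tl ℓ = s)).card = m →
    ∃ T : Fin m → List L, (∀ i, IsDiTrail tl hd s d (T i)) ∧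
      (∀ i, ∀ ℓ ∈ T i, ℓ ∈ E) ∧
      (∀ i j, i ≠ j → ∀ ℓ ∈ T i, ℓ ∉ T j) := by
  intro m
  induction m with
  | zero =>
    exact fun E _ _ _ _ =>
      ⟨Fin.elim0, fun i => i.elim0, fun i => i.elim0, fun i => i.elim0⟩
  | succ m ih =>
    intro E hs hd' cons hcard
    obtain ⟨t, tnd, tch, tne, thead, tlast, tmem⟩ :=
      extract_trail tl hd s d E.card E le_rfl hs hd' s hsd
        (fun w hws hwd _ => cons w hws hwd) (Or.inl ⟨rfl, by omega⟩)
    have hts : ∀ ℓ ∈ t, hd ℓ ≠ s ∧ tl ℓ ≠ d := by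
      intro ℓ hℓ
      constructor
      · intro h
        have : ℓ ∈ E.filter (fun ℓ => hd ℓ = s) := Finset.mem_filter.2 ⟨tmem ℓ hℓ, h⟩
        rw [hs] at this; exact absurd this (Finset.notMem_empty ℓ)
      · intro h
        have : ℓ ∈ E.filter (fun ℓ => tl ℓ = d) := Finset.mem_filter.2 ⟨tmem ℓ hℓ, h⟩
        rw [hd'] at this; exact absurd this (Finset.notMem_empty ℓ)
    have tc := trail_count tl hd s d t s tch tne thead tlast hts
    set E' := E \ t.toFinset with hE'
    have hs' : E'.filter (fun ℓ => hd ℓ = s) = ∅ := by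
      rw [← Finset.subset_empty, ← hs]
      exact Finset.filter_subset_filter _ Finset.sdiff_subset
    have hd'' : E'.filter (fun ℓ => tl ℓ = d) = ∅ := by
      rw [← Finset.subset_empty, ← hd']
      exact Finset.filter_subset_filter _ Finset.sdiff_subset
    have cons' : ∀ w, w ≠ s → w ≠ d →
        (E'.filter (fun ℓ => tl ℓ = w)).card = (E'.filter (fun ℓ => hd ℓ = w)).card := by
      intro w hws hwd
      have h1 := card_filter_sdiff E t tnd tmem (fun ℓ => tl ℓ = w)
      have h2 := card_filter_sdiff E t tnd tmem (fun ℓ => hd ℓ = w)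
      rw [← hE'] at h1 h2
      have tcw := tc w
      rw [if_neg hwd, if_neg hws] at tcw
      have := cons w hws hwd
      omega
    have hcard' : (E'.filter (fun ℓ => tl ℓ = s)).card = m := by
      have h1 := card_filter_sdiff E t tnd tmem (fun ℓ => tl ℓ = s)
      rw [← hE'] at h1
      have tcs := tc s
      rw [if_neg hsd, if_pos rfl] at tcs
      have hzero : t.countP (fun ℓ => decide (hd ℓ = s)) = 0 :=
        List.countP_eq_zero.2 (fun ℓ hℓ => by
          simp only [decide_eq_true_eq]; exact (hts ℓ hℓ).1)
      omega
    obtain ⟨T', hT1, hT2, hT3⟩ := ih E' hs' hd'' cons' hcard'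
    have hdisj : ∀ j : Fin m, ∀ ℓ ∈ T' j, ℓ ∉ t := by
      intro j ℓ hℓ ht
      have := hT2 j ℓ hℓ
      rw [hE', Finset.mem_sdiff] at this
      exact this.2 (List.mem_toFinset.2 ht)
    refine ⟨Fin.cons t T', ?_, ?_, ?_⟩
    · intro i
      rcases Fin.eq_zero_or_eq_succ i with rfl | ⟨i', rfl⟩
      · rw [Fin.cons_zero]
        exact ⟨tnd, tch, tne, thead, tlast⟩
      · rw [Fin.cons_succ]
        exact hT1 i'
    · intro i ℓ hℓ
      rcases Fin.eq_zero_or_eq_succ i with rfl | ⟨i', rfl⟩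
      · rw [Fin.cons_zero] at hℓ
        exact tmem ℓ hℓ
      · rw [Fin.cons_succ] at hℓ
        exact Finset.sdiff_subset (hT2 i' ℓ hℓ)
    · intro i j hij ℓ hℓi hℓj
      rcases Fin.eq_zero_or_eq_succ i with rfl | ⟨i', rfl⟩ <;>
        rcases Fin.eq_zero_or_eq_succ j with rfl | ⟨j', rfl⟩
      · exact hij rfl
      · rw [Fin.cons_zero] at hℓi
        rw [Fin.cons_succ] at hℓj
        exact hdisj j' ℓ hℓj hℓi
      · rw [Fin.cons_succ] at hℓi
        rw [Fin.cons_zero] at hℓj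
        exact hdisj i' ℓ hℓi hℓj
      · rw [Fin.cons_succ] at hℓi hℓj
        exact hT3 i' j' (fun h => hij (h ▸ rfl)) ℓ hℓi hℓj

/-- Correctness of the RWA formulation: every first-stage feasible integral assignment
yields a valid provisioning, i.e., for each node pair `p ∈ SD` exactly
`k p = Σ_ω Σ_{ℓ ∈ δ⁺(s)∩A(ω)} x` lightpaths (with `k p ≤ r̄ p`), each a wavelength
together with a directed trail through available wavelinks carrying `x = 1`, such that
no two distinct lightpaths of the whole family share a wavelink `(ℓ, ω)`. -/
theorem rwa_formulation_valid_provisioning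
    (tl hd : L → V) (A : W → Finset L) (SD : Finset (V × V))
    (hSD : ∀ p ∈ SD, p.1 ≠ p.2) (rbar : V × V → ℕ)
    (x : V × V → W → L → ℝ) (hx : FeasSD tl hd A SD rbar x) :
    ∃ k : V × V → ℕ,
      (∀ p ∈ SD, (k p : ℝ) =
        ∑ ω : W, ∑ ℓ ∈ (A ω).filter (fun ℓ => tl ℓ = p.1), x p ω ℓ) ∧
      (∀ p ∈ SD, k p ≤ rbar p) ∧
      ∃ P : (p : V × V) → Fin (k p) → W × List L,
        (∀ p ∈ SD, ∀ i : Fin (k p), IsDiTrail tl hd p.1 p.2 (P p i).2) ∧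
        (∀ p ∈ SD, ∀ i : Fin (k p), ∀ ℓ ∈ (P p i).2,
          ℓ ∈ A (P p i).1 ∧ x p (P p i).1 ℓ = 1) ∧
        (∀ p ∈ SD, ∀ q ∈ SD, ∀ (i : Fin (k p)) (j : Fin (k q)),
          (p ≠ q ∨ (i : ℕ) ≠ (j : ℕ)) →
          ∀ ℓ ∈ (P p i).2, (P p i).1 = (P q j).1 → ℓ ∉ (P q j).2) := by
  classical
  obtain ⟨hx01, hclash, hcons, hloops, hloopd, hdem⟩ := hx
  set Ep : (V × V) → W → Finset L :=
    fun p ω => (A ω).filter (fun ℓ => x p ω ℓ = 1) with hEp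
  have sum01 : ∀ p ∈ SD, ∀ ω : W, ∀ (q : L → Prop) (_ : DecidablePred q),
      ∑ ℓ ∈ (A ω).filter q, x p ω ℓ = (((Ep p ω).filter q).card : ℝ) := by
    intro p hp ω q _
    have hcomm : (Ep p ω).filter q = ((A ω).filter q).filter (fun ℓ => x p ω ℓ = 1) := by
      simp only [hEp]
      exact Finset.filter_comm _ _ _
    rw [hcomm,
      ← Finset.sum_filter_add_sum_filter_not ((A ω).filter q) (fun ℓ => x p ω ℓ = 1)]
    have hz : ∑ ℓ ∈ ((A ω).filter q).filter (fun ℓ => ¬x p ω ℓ = 1), x p ω ℓ = 0 :=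
      Finset.sum_eq_zero (fun ℓ hℓ => by
        have h1 := Finset.mem_filter.1 hℓ
        have h2 := Finset.mem_filter.1 h1.1
        rcases hx01 p hp ω ℓ h2.1 with h | h
        · exact h
        · exact absurd h h1.2)
    have ho : ∑ ℓ ∈ ((A ω).filter q).filter (fun ℓ => x p ω ℓ = 1), x p ω ℓ =
        ((((A ω).filter q).filter (fun ℓ => x p ω ℓ = 1)).card : ℝ) := by
      rw [Finset.sum_congr rfl (fun ℓ hℓ => (Finset.mem_filter.1 hℓ).2),
        Finset.sum_const, nsmul_eq_mul, mul_one]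
    rw [hz, ho, add_zero]
  have consEp : ∀ p ∈ SD, ∀ ω : W, ∀ w, w ≠ p.1 → w ≠ p.2 →
      ((Ep p ω).filter (fun ℓ => tl ℓ = w)).card =
        ((Ep p ω).filter (fun ℓ => hd ℓ = w)).card := by
    intro p hp ω w h1 h2
    have h := hcons ω p hp w h1 h2
    rw [sum01 p hp ω _ _, sum01 p hp ω _ _] at h
    exact_mod_cast h
  have hsEp : ∀ p ∈ SD, ∀ ω : W, (Ep p ω).filter (fun ℓ => hd ℓ = p.1) = ∅ := by
    intro p hp ω
    have h0 := hloops p hp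
    have hnn : ∀ ω' ∈ (Finset.univ : Finset W),
        0 ≤ ∑ ℓ ∈ (A ω').filter (fun ℓ => hd ℓ = p.1), x p ω' ℓ := by
      intro ω' _
      rw [sum01 p hp ω' _ _]
      positivity
    have h := (Finset.sum_eq_zero_iff_of_nonneg hnn).1 h0 ω (Finset.mem_univ ω)
    rw [sum01 p hp ω _ _] at h
    have h' : ((Ep p ω).filter (fun ℓ => hd ℓ = p.1)).card = 0 := by exact_mod_cast h
    exact Finset.card_eq_zero.1 h'
  have hdEp : ∀ p ∈ SD, ∀ ω : W, (Ep p ω).filter (fun ℓ => tl ℓ = p.2) = ∅ := by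
    intro p hp ω
    have h0 := hloopd p hp
    have hnn : ∀ ω' ∈ (Finset.univ : Finset W),
        0 ≤ ∑ ℓ ∈ (A ω').filter (fun ℓ => tl ℓ = p.2), x p ω' ℓ := by
      intro ω' _
      rw [sum01 p hp ω' _ _]
      positivity
    have h := (Finset.sum_eq_zero_iff_of_nonneg hnn).1 h0 ω (Finset.mem_univ ω)
    rw [sum01 p hp ω _ _] at h
    have h' : ((Ep p ω).filter (fun ℓ => tl ℓ = p.2)).card = 0 := by exact_mod_cast h
    exact Finset.card_eq_zero.1 h'
  set m : (V × V) → W → ℕ :=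
    fun p ω => ((Ep p ω).filter (fun ℓ => tl ℓ = p.1)).card with hm
  set k : (V × V) → ℕ := fun p => if p ∈ SD then ∑ ω : W, m p ω else 0 with hk
  have hk1 : ∀ p ∈ SD, (k p : ℝ) =
      ∑ ω : W, ∑ ℓ ∈ (A ω).filter (fun ℓ => tl ℓ = p.1), x p ω ℓ := by
    intro p hp
    simp only [hk, if_pos hp]
    push_cast
    exact Finset.sum_congr rfl (fun ω _ => (sum01 p hp ω _ _).symm)
  have hk2 : ∀ p ∈ SD, k p ≤ rbar p := by
    intro p hp
    have h := hdem p hp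
    rw [← hk1 p hp] at h
    exact_mod_cast h
  have hex : ∀ p : V × V, ∃ f : Fin (k p) → W × List L, p ∈ SD →
      ((∀ i, IsDiTrail tl hd p.1 p.2 (f i).2) ∧
       (∀ i, ∀ ℓ ∈ (f i).2, ℓ ∈ A (f i).1 ∧ x p (f i).1 ℓ = 1) ∧
       (∀ (i j : Fin (k p)), (i : ℕ) ≠ (j : ℕ) → ∀ ℓ ∈ (f i).2, (f i).1 = (f j).1 → ℓ ∉ (f j).2)) := by
    intro p
    by_cases hp : p ∈ SD
    · have hdec : ∀ ω : W, ∃ T : Fin (m p ω) → List L,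
          (∀ i, IsDiTrail tl hd p.1 p.2 (T i)) ∧ (∀ i, ∀ ℓ ∈ T i, ℓ ∈ Ep p ω) ∧
          (∀ i j, i ≠ j → ∀ ℓ ∈ T i, ℓ ∉ T j) := fun ω =>
        decompose tl hd p.1 p.2 (hSD p hp) (m p ω) (Ep p ω) (hsEp p hp ω) (hdEp p hp ω)
          (consEp p hp ω) rfl
      choose T hT1 hT2 hT3 using hdec
      have hcardeq : Fintype.card ((ω : W) × Fin (m p ω)) = k p := by
        simp [hk, hp]
      let e := Fintype.equivFinOfCardEq hcardeq
      refine ⟨fun i => ⟨(e.symm i).1, T (e.symm i).1 (e.symm i).2⟩,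
        fun _ => ⟨fun i => hT1 _ _, ?_, ?_⟩⟩
      · intro i ℓ hℓ
        have h := hT2 (e.symm i).1 (e.symm i).2 ℓ hℓ
        simp only [hEp] at h
        exact ⟨(Finset.mem_filter.1 h).1, (Finset.mem_filter.1 h).2⟩
      · intro i j hij ℓ hℓi hωeq hℓj
        have hne : e.symm i ≠ e.symm j :=
          fun h => hij (congrArg Fin.val (e.symm.injective h))
        dsimp only at hℓi hℓj hωeq
        obtain ⟨⟨ω₁, a⟩, hsi⟩ : ∃ s, e.symm i = s := ⟨_, rfl⟩
        obtain ⟨⟨ω₂, b⟩, hsj⟩ : ∃ s, e.symm j = s := ⟨_, rfl⟩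
        rw [hsi] at hℓi hωeq hne
        rw [hsj] at hℓj hωeq hne
        dsimp only at hℓi hℓj hωeq
        subst hωeq
        have hab : a ≠ b := fun h => hne (by rw [h])
        exact hT3 ω₁ a b hab ℓ hℓi hℓj
    · exact ⟨fun i => absurd i.isLt (by simp [hk, hp]), fun h => absurd h hp⟩
  choose P hP using hex
  refine ⟨k, hk1, hk2, P, fun p hp i => (hP p hp).1 i,
    fun p hp i ℓ hℓ => (hP p hp).2.1 i ℓ hℓ, ?_⟩
  intro p hp q hq i j hne ℓ hℓi hωeq hℓj
  by_cases hpq : p = q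
  · subst hpq
    rcases hne with h | h
    · exact h rfl
    · exact (hP p hp).2.2 i j h ℓ hℓi hωeq hℓj
  · have h1 := (hP p hp).2.1 i ℓ hℓi
    have h2 := (hP q hq).2.1 j ℓ hℓj
    rw [← hωeq] at h2
    have hsum := hclash (P p i).1 ℓ h1.1
    have hnn : ∀ r ∈ SD, 0 ≤ x r (P p i).1 ℓ := fun r hr => by
      rcases hx01 r hr (P p i).1 ℓ h1.1 with h | h <;> rw [h] <;> norm_num
    have hpair : ({p, q} : Finset (V × V)) ⊆ SD := by
      intro r hr
      rcases Finset.mem_insert.1 hr with rfl | hr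
      · exact hp
      · exact (Finset.mem_singleton.1 hr) ▸ hq
    have hle := Finset.sum_le_sum_of_subset_of_nonneg hpair (fun r hr _ => hnn r hr)
    rw [Finset.sum_pair hpq, h1.2, h2.2] at hle
    linarith
end

section
/- The auxiliary subproblem sub̄ is a relaxation of the Benders subproblem sub: fix a scenario (SD2, r) and a real-valued first-stage assignment x with x_{ℓ,ω}^{(s,d)} ≥ 0 for all indices, and set β_ℓ = Σ_{ω∈Ω with ℓ∈A(ω)} Σ_{(s,d)∈SD} x_{ℓ,ω}^{(s,d)} for each ℓ ∈ L. If (y, z) is feasible for sub(x), then (y, z) is feasible for the relaxed subproblem sub̄(β). Consequently every objective value Σ_{(s,d)∈SD2} z^{(s,d)} attainable in sub(x) is attainable in sub̄(β), so the optimal value of sub̄(β) is an upper bound on the recourse value of sub(x). -/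
open Finset

variable {V L W : Type*} [Fintype V] [DecidableEq V] [Fintype L] [DecidableEq L]
  [Fintype W] [DecidableEq W]

/-- Second-stage (recourse) feasibility for the Benders subproblem `sub(x)`. -/
def SubFeas (tl hd : L → V) (A : W → Finset L) (SD SD2 : Finset (V × V))
    (r : V × V → ℕ) (x y : V × V → W → L → ℝ) (z : V × V → ℝ) : Prop :=
  (∀ p ∈ SD2, ∀ ω : W, ∀ ℓ ∈ A ω, 0 ≤ y p ω ℓ) ∧
  (∀ ω : W, ∀ ℓ ∈ A ω, ∑ p ∈ SD2, y p ω ℓ ≤ 1 - ∑ p ∈ SD, x p ω ℓ) ∧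
  (∀ ω : W, ∀ p ∈ SD2, ∀ v : V, v ≠ p.1 → v ≠ p.2 →
      ∑ ℓ ∈ (A ω).filter (fun ℓ => tl ℓ = v), y p ω ℓ =
      ∑ ℓ ∈ (A ω).filter (fun ℓ => hd ℓ = v), y p ω ℓ) ∧
  (∀ p ∈ SD2, ∑ ω : W, ∑ ℓ ∈ (A ω).filter (fun ℓ => hd ℓ = p.1), y p ω ℓ = 0) ∧
  (∀ p ∈ SD2, ∑ ω : W, ∑ ℓ ∈ (A ω).filter (fun ℓ => tl ℓ = p.2), y p ω ℓ = 0) ∧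
  (∀ p ∈ SD2, ∑ ω : W, ∑ ℓ ∈ (A ω).filter (fun ℓ => tl ℓ = p.1), y p ω ℓ ≤ (r p : ℝ)) ∧
  (∀ p ∈ SD2, z p = ∑ ω : W, ∑ ℓ ∈ (A ω).filter (fun ℓ => tl ℓ = p.1), y p ω ℓ)

/-- Feasibility for the relaxed (auxiliary) subproblem `sub̄(β)` used by the β-cuts. -/
def RelFeas (tl hd : L → V) (A : W → Finset L) (SD2 : Finset (V × V))
    (r : V × V → ℕ) (β : L → ℝ) (y : V × V → W → L → ℝ) (z : V × V → ℝ) : Prop :=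
  (∀ p ∈ SD2, ∀ ω : W, ∀ ℓ ∈ A ω, 0 ≤ y p ω ℓ) ∧
  (∀ ℓ : L, ∑ ω ∈ Finset.univ.filter (fun ω : W => ℓ ∈ A ω), ∑ p ∈ SD2, y p ω ℓ ≤
      ((Finset.univ.filter (fun ω : W => ℓ ∈ A ω)).card : ℝ) - β ℓ) ∧
  (∀ ω : W, ∀ ℓ ∈ A ω, ∑ p ∈ SD2, y p ω ℓ ≤ 1) ∧
  (∀ ω : W, ∀ p ∈ SD2, ∀ v : V, v ≠ p.1 → v ≠ p.2 →
      ∑ ℓ ∈ (A ω).filter (fun ℓ => tl ℓ = v), y p ω ℓ =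
      ∑ ℓ ∈ (A ω).filter (fun ℓ => hd ℓ = v), y p ω ℓ) ∧
  (∀ p ∈ SD2, ∑ ω : W, ∑ ℓ ∈ (A ω).filter (fun ℓ => hd ℓ = p.1), y p ω ℓ = 0) ∧
  (∀ p ∈ SD2, ∑ ω : W, ∑ ℓ ∈ (A ω).filter (fun ℓ => tl ℓ = p.2), y p ω ℓ = 0) ∧
  (∀ p ∈ SD2, ∑ ω : W, ∑ ℓ ∈ (A ω).filter (fun ℓ => tl ℓ = p.1), y p ω ℓ ≤ (r p : ℝ)) ∧
  (∀ p ∈ SD2, z p = ∑ ω : W, ∑ ℓ ∈ (A ω).filter (fun ℓ => tl ℓ = p.1), y p ω ℓ)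

/-- The auxiliary subproblem `sub̄(β)` (with `β` the aggregate first-stage link usage)
is a relaxation of the Benders subproblem `sub(x)`: every second-stage solution
feasible for `sub(x)` remains feasible for `sub̄(β)`, every attainable objective value
of `sub(x)` is attainable in `sub̄(β)`, and the optimal value of `sub̄(β)` bounds the
recourse value of `sub(x)` from above. -/
theorem relaxed_subproblem_is_relaxation
    (tl hd : L → V) (A : W → Finset L) (SD SD2 : Finset (V × V))
    (hSD : ∀ p ∈ SD, p.1 ≠ p.2) (hSD2 : ∀ p ∈ SD2, p.1 ≠ p.2)
    (r : V × V → ℕ) (x : V × V → W → L → ℝ)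
    (hx0 : ∀ p ∈ SD, ∀ ω : W, ∀ ℓ ∈ A ω, 0 ≤ x p ω ℓ)
    (β : L → ℝ)
    (hβ : ∀ ℓ : L, β ℓ =
      ∑ ω ∈ Finset.univ.filter (fun ω : W => ℓ ∈ A ω), ∑ p ∈ SD, x p ω ℓ) :
    (∀ (y : V × V → W → L → ℝ) (z : V × V → ℝ),
      SubFeas tl hd A SD SD2 r x y z → RelFeas tl hd A SD2 r β y z) ∧
    ({c : ℝ | ∃ y z, SubFeas tl hd A SD SD2 r x y z ∧ c = ∑ p ∈ SD2, z p} ⊆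
      {c : ℝ | ∃ y z, RelFeas tl hd A SD2 r β y z ∧ c = ∑ p ∈ SD2, z p}) ∧
    sSup {c : ℝ | ∃ y z, SubFeas tl hd A SD SD2 r x y z ∧ c = ∑ p ∈ SD2, z p} ≤
      sSup {c : ℝ | ∃ y z, RelFeas tl hd A SD2 r β y z ∧ c = ∑ p ∈ SD2, z p} := by

  have hmain : ∀ (y : V × V → W → L → ℝ) (z : V × V → ℝ),
      SubFeas tl hd A SD SD2 r x y z → RelFeas tl hd A SD2 r β y z := by
    rintro y z ⟨h1, h2, h3, h4, h5, h6, h7⟩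
    refine ⟨h1, ?_, ?_, h3, h4, h5, h6, h7⟩
    · intro ℓ
      rw [hβ ℓ]
      calc ∑ ω ∈ Finset.univ.filter (fun ω : W => ℓ ∈ A ω), ∑ p ∈ SD2, y p ω ℓ
          ≤ ∑ ω ∈ Finset.univ.filter (fun ω : W => ℓ ∈ A ω), (1 - ∑ p ∈ SD, x p ω ℓ) :=
            Finset.sum_le_sum fun ω hω => h2 ω ℓ (Finset.mem_filter.mp hω).2
        _ = _ := by
            rw [Finset.sum_sub_distrib, Finset.sum_const, nsmul_eq_mul, mul_one]
    · intro ω ℓ hℓ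
      have h := h2 ω ℓ hℓ
      have hx : 0 ≤ ∑ p ∈ SD, x p ω ℓ := Finset.sum_nonneg fun p hp => hx0 p hp ω ℓ hℓ
      linarith
  have hsub : {c : ℝ | ∃ y z, SubFeas tl hd A SD SD2 r x y z ∧ c = ∑ p ∈ SD2, z p} ⊆
      {c : ℝ | ∃ y z, RelFeas tl hd A SD2 r β y z ∧ c = ∑ p ∈ SD2, z p} := by
    rintro c ⟨y, z, hf, hc⟩
    exact ⟨y, z, hmain y z hf, hc⟩
  refine ⟨hmain, hsub, ?_⟩
  set S := {c : ℝ | ∃ y z, SubFeas tl hd A SD SD2 r x y z ∧ c = ∑ p ∈ SD2, z p}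
  set T := {c : ℝ | ∃ y z, RelFeas tl hd A SD2 r β y z ∧ c = ∑ p ∈ SD2, z p}
  have hTle : ∀ c ∈ T, c ≤ ∑ p ∈ SD2, (r p : ℝ) := by
    rintro c ⟨y, z, hf, hc⟩
    subst hc
    exact Finset.sum_le_sum fun p hp => (hf.2.2.2.2.2.2.2 p hp) ▸ hf.2.2.2.2.2.2.1 p hp
  have hTbdd : BddAbove T := ⟨∑ p ∈ SD2, (r p : ℝ), hTle⟩
  have hT0 : ∀ c ∈ T, 0 ≤ c := by
    rintro c ⟨y, z, hf, hc⟩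
    subst hc
    refine Finset.sum_nonneg fun p hp => ?_
    rw [hf.2.2.2.2.2.2.2 p hp]
    refine Finset.sum_nonneg fun ω _ => Finset.sum_nonneg fun ℓ hℓ => ?_
    exact hf.1 p hp ω ℓ (Finset.mem_filter.mp hℓ).1
  rcases Set.eq_empty_or_nonempty S with hS | hS
  · rw [hS, Real.sSup_empty]
    rcases Set.eq_empty_or_nonempty T with hT | ⟨t, ht⟩
    · rw [hT, Real.sSup_empty]
    · exact le_trans (hT0 t ht) (le_csSup hTbdd ht)
  · exact csSup_le_csSup hTbdd hS hsub
end

section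
/- Validity of the β-cuts: fix a scenario (SD2, r) and let n_ℓ = |{ω ∈ Ω : ℓ ∈ A(ω)}|. Suppose given multipliers π : L → ℝ with π ≥ 0; σ_{ℓ,ω} ≥ 0 for each ω ∈ Ω and ℓ ∈ A(ω); γ : SD2 → ℝ with γ ≥ 0; θ : SD2 → ℝ; μ_{ω,(s,d),v} ∈ ℝ for each ω ∈ Ω, (s,d) ∈ SD2 and v ∈ V with v ≠ s, v ≠ d; and ρ⁻, ρ⁺ : SD2 → ℝ, satisfying the dual feasibility conditions: (i) θ^{(s,d)} ≥ 1 for every (s,d) ∈ SD2; and (ii) for every (s,d) ∈ SD2, ω ∈ Ω and ℓ ∈ A(ω): π_ℓ + σ_{ℓ,ω} + Σ_{v∈V, v≠s, v≠d} μ_{ω,(s,d),v}·(𝟙[tail(ℓ)=v] − 𝟙[head(ℓ)=v]) + ρ⁻^{(s,d)}·𝟙[head(ℓ)=s] + ρ⁺^{(s,d)}·𝟙[tail(ℓ)=d] + (γ^{(s,d)} − θ^{(s,d)})·𝟙[tail(ℓ)=s] ≥ 0. Then for every β : L → ℝ and every (y, z) feasible for the relaxed subproblem sub̄(β): Σ_{(s,d)∈SD2}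 z^{(s,d)} ≤ Σ_{ℓ∈L} π_ℓ·(n_ℓ − β_ℓ) + Σ_{(s,d)∈SD2} γ^{(s,d)}·r(s,d) + Σ_{ω∈Ω} Σ_{ℓ∈A(ω)} σ_{ℓ,ω}; i.e., the β-cut is a valid upper bound on the relaxed recourse objective for every value of β. -/
open Finset

variable {V L W : Type*} [Fintype V] [DecidableEq V] [Fintype L] [DecidableEq L]
  [Fintype W] [DecidableEq W]

/-- Validity of the β-cuts: any dual-feasible multipliers
`(π, σ, γ, θ, μ, ρ⁻, ρ⁺)` for the relaxed subproblem yield, for every `β` and every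
`(y, z)` feasible for `sub̄(β)`, the upper bound
`Σ z ≤ Σ_ℓ π_ℓ (n_ℓ − β_ℓ) + Σ_p γ_p r_p + Σ_ω Σ_{ℓ∈A(ω)} σ_{ℓ,ω}`. -/
theorem beta_cut_valid
    (tl hd : L → V) (A : W → Finset L) (SD2 : Finset (V × V))
    (hSD2 : ∀ p ∈ SD2, p.1 ≠ p.2) (r : V × V → ℕ)
    (π : L → ℝ) (σ : W → L → ℝ) (γ θ : V × V → ℝ)
    (μ : W → V × V → V → ℝ) (ρm ρp : V × V → ℝ)
    (hπ : ∀ ℓ : L, 0 ≤ π ℓ)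
    (hσ : ∀ ω : W, ∀ ℓ ∈ A ω, 0 ≤ σ ω ℓ)
    (hγ : ∀ p ∈ SD2, 0 ≤ γ p)
    (hθ : ∀ p ∈ SD2, 1 ≤ θ p)
    (hdual : ∀ p ∈ SD2, ∀ ω : W, ∀ ℓ ∈ A ω,
      0 ≤ π ℓ + σ ω ℓ
        + (∑ v ∈ Finset.univ.filter (fun v : V => v ≠ p.1 ∧ v ≠ p.2),
            μ ω p v * ((if tl ℓ = v then (1 : ℝ) else 0) -
                        (if hd ℓ = v then (1 : ℝ) else 0)))
        + ρm p * (if hd ℓ = p.1 then (1 : ℝ) else 0)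
        + ρp p * (if tl ℓ = p.2 then (1 : ℝ) else 0)
        + (γ p - θ p) * (if tl ℓ = p.1 then (1 : ℝ) else 0)) :
    ∀ (β : L → ℝ) (y : V × V → W → L → ℝ) (z : V × V → ℝ),
      RelFeas tl hd A SD2 r β y z →
      ∑ p ∈ SD2, z p ≤
        (∑ ℓ : L, π ℓ *
            (((Finset.univ.filter (fun ω : W => ℓ ∈ A ω)).card : ℝ) - β ℓ))
          + (∑ p ∈ SD2, γ p * (r p : ℝ))
          + ∑ ω : W, ∑ ℓ ∈ A ω, σ ω ℓ := by
  
  intro β y z hfeas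
  obtain ⟨hy0, hcap, hcol, hflow, hin, hout, hdem, hz⟩ := hfeas
  classical
  -- swap lemma
  have swap : ∀ f : W → L → ℝ, ∑ ω : W, ∑ ℓ ∈ A ω, f ω ℓ =
      ∑ ℓ : L, ∑ ω ∈ Finset.univ.filter (fun ω : W => ℓ ∈ A ω), f ω ℓ := by
    intro f
    have h1 : ∀ ω : W, ∑ ℓ ∈ A ω, f ω ℓ = ∑ ℓ : L, if ℓ ∈ A ω then f ω ℓ else 0 := by
      intro ω
      rw [← Finset.sum_filter]
      congr 1
      simp [Finset.filter_mem_eq_inter]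
    simp_rw [h1]
    rw [Finset.sum_comm]
    refine Finset.sum_congr rfl fun ℓ _ => ?_
    rw [Finset.sum_filter]
  -- the six partial sums
  set S1 := ∑ p ∈ SD2, ∑ ω : W, ∑ ℓ ∈ A ω, π ℓ * y p ω ℓ with hS1def
  set S2 := ∑ p ∈ SD2, ∑ ω : W, ∑ ℓ ∈ A ω, σ ω ℓ * y p ω ℓ with hS2def
  set S3 := ∑ p ∈ SD2, ∑ ω : W, ∑ ℓ ∈ A ω,
      (∑ v ∈ Finset.univ.filter (fun v : V => v ≠ p.1 ∧ v ≠ p.2),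
        μ ω p v * ((if tl ℓ = v then (1 : ℝ) else 0) -
                    (if hd ℓ = v then (1 : ℝ) else 0))) * y p ω ℓ with hS3def
  set S4 := ∑ p ∈ SD2, ∑ ω : W, ∑ ℓ ∈ A ω,
      (ρm p * (if hd ℓ = p.1 then (1 : ℝ) else 0)) * y p ω ℓ with hS4def
  set S5 := ∑ p ∈ SD2, ∑ ω : W, ∑ ℓ ∈ A ω,
      (ρp p * (if tl ℓ = p.2 then (1 : ℝ) else 0)) * y p ω ℓ with hS5def
  set S6 := ∑ p ∈ SD2, ∑ ω : W, ∑ ℓ ∈ A ω,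
      ((γ p - θ p) * (if tl ℓ = p.1 then (1 : ℝ) else 0)) * y p ω ℓ with hS6def
  have key : 0 ≤ S1 + S2 + S3 + S4 + S5 + S6 := by
    have h0 : 0 ≤ ∑ p ∈ SD2, ∑ ω : W, ∑ ℓ ∈ A ω,
        (π ℓ + σ ω ℓ
          + (∑ v ∈ Finset.univ.filter (fun v : V => v ≠ p.1 ∧ v ≠ p.2),
              μ ω p v * ((if tl ℓ = v then (1 : ℝ) else 0) -
                          (if hd ℓ = v then (1 : ℝ) else 0)))
          + ρm p * (if hd ℓ = p.1 then (1 : ℝ) else 0)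
          + ρp p * (if tl ℓ = p.2 then (1 : ℝ) else 0)
          + (γ p - θ p) * (if tl ℓ = p.1 then (1 : ℝ) else 0)) * y p ω ℓ := by
      refine Finset.sum_nonneg fun p hp => Finset.sum_nonneg fun ω _ =>
        Finset.sum_nonneg fun ℓ hℓ => ?_
      exact mul_nonneg (hdual p hp ω ℓ hℓ) (hy0 p hp ω ℓ hℓ)
    calc (0 : ℝ) ≤ _ := h0
      _ = S1 + S2 + S3 + S4 + S5 + S6 := by
        rw [hS1def, hS2def, hS3def, hS4def, hS5def, hS6def]
        simp only [add_mul, Finset.sum_add_distrib]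
  -- S1 bound
  have hS1 : S1 ≤ ∑ ℓ : L, π ℓ *
      (((Finset.univ.filter (fun ω : W => ℓ ∈ A ω)).card : ℝ) - β ℓ) := by
    have e1 : S1 = ∑ ℓ : L, π ℓ *
        ∑ ω ∈ Finset.univ.filter (fun ω : W => ℓ ∈ A ω), ∑ p ∈ SD2, y p ω ℓ := by
      rw [hS1def, Finset.sum_comm]
      have inner : ∀ ω : W, ∑ p ∈ SD2, ∑ ℓ ∈ A ω, π ℓ * y p ω ℓ =
          ∑ ℓ ∈ A ω, ∑ p ∈ SD2, π ℓ * y p ω ℓ := fun ω => Finset.sum_comm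
      simp_rw [inner]
      rw [swap (fun ω ℓ => ∑ p ∈ SD2, π ℓ * y p ω ℓ)]
      refine Finset.sum_congr rfl fun ℓ _ => ?_
      rw [Finset.mul_sum]
      exact Finset.sum_congr rfl fun ω _ => by rw [Finset.mul_sum]
    rw [e1]
    exact Finset.sum_le_sum fun ℓ _ =>
      mul_le_mul_of_nonneg_left (hcap ℓ) (hπ ℓ)
  -- S2 bound
  have hS2 : S2 ≤ ∑ ω : W, ∑ ℓ ∈ A ω, σ ω ℓ := by
    have e2 : S2 = ∑ ω : W, ∑ ℓ ∈ A ω, σ ω ℓ * ∑ p ∈ SD2, y p ω ℓ := by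
      rw [hS2def, Finset.sum_comm]
      refine Finset.sum_congr rfl fun ω _ => ?_
      rw [Finset.sum_comm]
      exact Finset.sum_congr rfl fun ℓ _ => by rw [Finset.mul_sum]
    rw [e2]
    refine Finset.sum_le_sum fun ω _ => Finset.sum_le_sum fun ℓ hℓ => ?_
    calc σ ω ℓ * ∑ p ∈ SD2, y p ω ℓ ≤ σ ω ℓ * 1 :=
          mul_le_mul_of_nonneg_left (hcol ω ℓ hℓ) (hσ ω ℓ hℓ)
      _ = σ ω ℓ := mul_one _
  -- helper for indicator sums
  have ind : ∀ (g : L → V) (v : V) (ω : W) (p : V × V),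
      ∑ ℓ ∈ A ω, (if g ℓ = v then (1 : ℝ) else 0) * y p ω ℓ =
      ∑ ℓ ∈ (A ω).filter (fun ℓ => g ℓ = v), y p ω ℓ := by
    intro g v ω p
    rw [Finset.sum_filter]
    exact Finset.sum_congr rfl fun ℓ _ => by split <;> simp
  -- S3 = 0
  have hS3 : S3 = 0 := by
    rw [hS3def]
    refine Finset.sum_eq_zero fun p hp => Finset.sum_eq_zero fun ω _ => ?_
    have : ∑ ℓ ∈ A ω,
        (∑ v ∈ Finset.univ.filter (fun v : V => v ≠ p.1 ∧ v ≠ p.2),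
          μ ω p v * ((if tl ℓ = v then (1 : ℝ) else 0) -
                      (if hd ℓ = v then (1 : ℝ) else 0))) * y p ω ℓ
        = ∑ v ∈ Finset.univ.filter (fun v : V => v ≠ p.1 ∧ v ≠ p.2),
            μ ω p v * ((∑ ℓ ∈ (A ω).filter (fun ℓ => tl ℓ = v), y p ω ℓ) -
                       (∑ ℓ ∈ (A ω).filter (fun ℓ => hd ℓ = v), y p ω ℓ)) := by
      simp_rw [Finset.sum_mul]
      rw [Finset.sum_comm]
      refine Finset.sum_congr rfl fun v _ => ?_
      rw [← ind tl v ω p, ← ind hd v ω p, ← Finset.sum_sub_distrib, Finset.mul_sum]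
      refine Finset.sum_congr rfl fun ℓ _ => by ring
    rw [this]
    refine Finset.sum_eq_zero fun v hv => ?_
    rw [Finset.mem_filter] at hv
    rw [hflow ω p hp v hv.2.1 hv.2.2]
    ring
  -- S4 = 0
  have hS4 : S4 = 0 := by
    rw [hS4def]
    refine Finset.sum_eq_zero fun p hp => ?_
    have : ∀ ω : W, ∑ ℓ ∈ A ω, (ρm p * (if hd ℓ = p.1 then (1 : ℝ) else 0)) * y p ω ℓ
        = ρm p * ∑ ℓ ∈ (A ω).filter (fun ℓ => hd ℓ = p.1), y p ω ℓ := by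
      intro ω
      rw [← ind hd p.1 ω p, Finset.mul_sum]
      exact Finset.sum_congr rfl fun ℓ _ => by ring
    simp_rw [this, ← Finset.mul_sum, hin p hp, mul_zero]
  -- S5 = 0
  have hS5 : S5 = 0 := by
    rw [hS5def]
    refine Finset.sum_eq_zero fun p hp => ?_
    have : ∀ ω : W, ∑ ℓ ∈ A ω, (ρp p * (if tl ℓ = p.2 then (1 : ℝ) else 0)) * y p ω ℓ
        = ρp p * ∑ ℓ ∈ (A ω).filter (fun ℓ => tl ℓ = p.2), y p ω ℓ := by
      intro ω
      rw [← ind tl p.2 ω p, Finset.mul_sum]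
      exact Finset.sum_congr rfl fun ℓ _ => by ring
    simp_rw [this, ← Finset.mul_sum, hout p hp, mul_zero]
  -- S6
  have hS6 : S6 = ∑ p ∈ SD2, (γ p - θ p) *
      ∑ ω : W, ∑ ℓ ∈ (A ω).filter (fun ℓ => tl ℓ = p.1), y p ω ℓ := by
    rw [hS6def]
    refine Finset.sum_congr rfl fun p hp => ?_
    rw [Finset.mul_sum]
    refine Finset.sum_congr rfl fun ω _ => ?_
    rw [← ind tl p.1 ω p, Finset.mul_sum]
    exact Finset.sum_congr rfl fun ℓ _ => by ring
  -- F nonneg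
  have hF0 : ∀ p ∈ SD2, 0 ≤ ∑ ω : W, ∑ ℓ ∈ (A ω).filter (fun ℓ => tl ℓ = p.1), y p ω ℓ := by
    intro p hp
    refine Finset.sum_nonneg fun ω _ => Finset.sum_nonneg fun ℓ hℓ => ?_
    exact hy0 p hp ω ℓ (Finset.mem_of_mem_filter ℓ hℓ)
  -- conclude
  have step1 : ∑ p ∈ SD2, z p ≤ ∑ p ∈ SD2, θ p *
      ∑ ω : W, ∑ ℓ ∈ (A ω).filter (fun ℓ => tl ℓ = p.1), y p ω ℓ := by
    refine Finset.sum_le_sum fun p hp => ?_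
    rw [hz p hp]
    exact le_mul_of_one_le_left (hF0 p hp) (hθ p hp)
  have step2 : ∑ p ∈ SD2, θ p *
      ∑ ω : W, ∑ ℓ ∈ (A ω).filter (fun ℓ => tl ℓ = p.1), y p ω ℓ
      ≤ S1 + S2 + ∑ p ∈ SD2, γ p *
        ∑ ω : W, ∑ ℓ ∈ (A ω).filter (fun ℓ => tl ℓ = p.1), y p ω ℓ := by
    have := key
    rw [hS3, hS4, hS5, hS6] at this
    have expand : ∑ p ∈ SD2, (γ p - θ p) *
        ∑ ω : W, ∑ ℓ ∈ (A ω).filter (fun ℓ => tl ℓ = p.1), y p ω ℓ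
        = (∑ p ∈ SD2, γ p * ∑ ω : W, ∑ ℓ ∈ (A ω).filter (fun ℓ => tl ℓ = p.1), y p ω ℓ)
          - ∑ p ∈ SD2, θ p * ∑ ω : W, ∑ ℓ ∈ (A ω).filter (fun ℓ => tl ℓ = p.1), y p ω ℓ := by
      rw [← Finset.sum_sub_distrib]
      exact Finset.sum_congr rfl fun p _ => by ring
    rw [expand] at this
    linarith
  have step3 : ∑ p ∈ SD2, γ p *
      ∑ ω : W, ∑ ℓ ∈ (A ω).filter (fun ℓ => tl ℓ = p.1), y p ω ℓ
      ≤ ∑ p ∈ SD2, γ p * (r p : ℝ) := by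
    refine Finset.sum_le_sum fun p hp => ?_
    exact mul_le_mul_of_nonneg_left (hdem p hp) (hγ p hp)
  calc ∑ p ∈ SD2, z p ≤ _ := step1
    _ ≤ _ := step2
    _ ≤ (∑ ℓ : L, π ℓ * (((Finset.univ.filter (fun ω : W => ℓ ∈ A ω)).card : ℝ) - β ℓ))
        + (∑ ω : W, ∑ ℓ ∈ A ω, σ ω ℓ) + ∑ p ∈ SD2, γ p * (r p : ℝ) := by
      exact add_le_add (add_le_add hS1 hS2) step3
    _ = _ := by ring
end

section
/- Validity of the Benders optimality cuts (x-cuts): fix a scenario (SD2, r). Suppose given multipliers α_{ℓ,ω} ≥ 0 for each ω ∈ Ω and ℓ ∈ A(ω); γ : SD2 → ℝ with γ ≥ 0; θ : SD2 → ℝ; μ_{ω,(s,d),v} ∈ ℝ for each ω ∈ Ω, (s,d) ∈ SD2 and v ∈ V with v ≠ s, v ≠ d; and ρ⁻, ρ⁺ : SD2 → ℝ, satisfying the dual feasibility conditions: (i) θ^{(s,d)} ≥ 1 for every (s,d) ∈ SD2; and (ii) for every (s,d) ∈ SD2, ω ∈ Ω and ℓ ∈ A(ω): α_{ℓ,ω}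 + Σ_{v∈V, v≠s, v≠d} μ_{ω,(s,d),v}·(𝟙[tail(ℓ)=v] − 𝟙[head(ℓ)=v]) + ρ⁻^{(s,d)}·𝟙[head(ℓ)=s] + ρ⁺^{(s,d)}·𝟙[tail(ℓ)=d] + (γ^{(s,d)} − θ^{(s,d)})·𝟙[tail(ℓ)=s] ≥ 0. Then for every real-valued first-stage assignment x (indexed over SD, Ω and A(ω)) and every (y, z) feasible for sub(x): Σ_{(s,d)∈SD2} z^{(s,d)} ≤ Σ_{ω∈Ω} Σ_{ℓ∈A(ω)} α_{ℓ,ω}·(1 − Σ_{(s,d)∈SD} x_{ℓ,ω}^{(s,d)}) + Σ_{(s,d)∈SD2} γ^{(s,d)}·r(s,d); i.e., the Benders optimality cut generated from dual-feasible multipliers is a valid upper bound on the recourse objective for every first-stage decision x. -/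
open Finset

variable {V L W : Type*} [Fintype V] [DecidableEq V] [Fintype L] [DecidableEq L]
  [Fintype W] [DecidableEq W]

/-- Validity of the Benders optimality cuts (x-cuts): any dual-feasible multipliers
`(α, γ, θ, μ, ρ⁻, ρ⁺)` for the Benders subproblem yield, for every first-stage
assignment `x` and every `(y, z)` feasible for `sub(x)`, the upper bound
`Σ z ≤ Σ_ω Σ_{ℓ∈A(ω)} α_{ℓ,ω} (1 − Σ_{(s,d)∈SD} x_{ℓ,ω}) + Σ_p γ_p r_p`. -/
theorem x_cut_valid
    (tl hd : L → V) (A : W → Finset L) (SD SD2 : Finset (V × V))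
    (hSD : ∀ p ∈ SD, p.1 ≠ p.2) (hSD2 : ∀ p ∈ SD2, p.1 ≠ p.2)
    (r : V × V → ℕ)
    (α : W → L → ℝ) (γ θ : V × V → ℝ)
    (μ : W → V × V → V → ℝ) (ρm ρp : V × V → ℝ)
    (hα : ∀ ω : W, ∀ ℓ ∈ A ω, 0 ≤ α ω ℓ)
    (hγ : ∀ p ∈ SD2, 0 ≤ γ p)
    (hθ : ∀ p ∈ SD2, 1 ≤ θ p)
    (hdual : ∀ p ∈ SD2, ∀ ω : W, ∀ ℓ ∈ A ω,
      0 ≤ α ω ℓ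
        + (∑ v ∈ Finset.univ.filter (fun v : V => v ≠ p.1 ∧ v ≠ p.2),
            μ ω p v * ((if tl ℓ = v then (1 : ℝ) else 0) -
                        (if hd ℓ = v then (1 : ℝ) else 0)))
        + ρm p * (if hd ℓ = p.1 then (1 : ℝ) else 0)
        + ρp p * (if tl ℓ = p.2 then (1 : ℝ) else 0)
        + (γ p - θ p) * (if tl ℓ = p.1 then (1 : ℝ) else 0)) :
    ∀ (x y : V × V → W → L → ℝ) (z : V × V → ℝ),
      SubFeas tl hd A SD SD2 r x y z →
      ∑ p ∈ SD2, z p ≤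
        (∑ ω : W, ∑ ℓ ∈ A ω, α ω ℓ * (1 - ∑ p ∈ SD, x p ω ℓ))
          + ∑ p ∈ SD2, γ p * (r p : ℝ) := by
  rintro x y z ⟨hy0, hcap, hflow, hsrcin, hdstout, hbound, hz⟩
  have key : ∀ p ∈ SD2,
      θ p * z p ≤ (∑ ω : W, ∑ ℓ ∈ A ω, α ω ℓ * y p ω ℓ) + γ p * (r p : ℝ) := by
    intro p hp
    have hS : (0:ℝ) ≤ ∑ ω : W, ∑ ℓ ∈ A ω,
        (α ω ℓ
          + (∑ v ∈ Finset.univ.filter (fun v : V => v ≠ p.1 ∧ v ≠ p.2),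
              μ ω p v * ((if tl ℓ = v then (1:ℝ) else 0) -
                          (if hd ℓ = v then (1:ℝ) else 0)))
          + ρm p * (if hd ℓ = p.1 then (1:ℝ) else 0)
          + ρp p * (if tl ℓ = p.2 then (1:ℝ) else 0)
          + (γ p - θ p) * (if tl ℓ = p.1 then (1:ℝ) else 0)) * y p ω ℓ :=
      Finset.sum_nonneg fun ω _ => Finset.sum_nonneg fun ℓ hℓ =>
        mul_nonneg (hdual p hp ω ℓ hℓ) (hy0 p hp ω ℓ hℓ)
    have hsplit : ∀ ω : W, (∑ ℓ ∈ A ω,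
        (α ω ℓ
          + (∑ v ∈ Finset.univ.filter (fun v : V => v ≠ p.1 ∧ v ≠ p.2),
              μ ω p v * ((if tl ℓ = v then (1:ℝ) else 0) -
                          (if hd ℓ = v then (1:ℝ) else 0)))
          + ρm p * (if hd ℓ = p.1 then (1:ℝ) else 0)
          + ρp p * (if tl ℓ = p.2 then (1:ℝ) else 0)
          + (γ p - θ p) * (if tl ℓ = p.1 then (1:ℝ) else 0)) * y p ω ℓ)
        = (∑ ℓ ∈ A ω, α ω ℓ * y p ω ℓ)
          + ρm p * (∑ ℓ ∈ (A ω).filter (fun ℓ => hd ℓ = p.1), y p ω ℓ)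
          + ρp p * (∑ ℓ ∈ (A ω).filter (fun ℓ => tl ℓ = p.2), y p ω ℓ)
          + (γ p - θ p) * (∑ ℓ ∈ (A ω).filter (fun ℓ => tl ℓ = p.1), y p ω ℓ) := by
      intro ω
      have e1 : ∀ ℓ ∈ A ω,
          (α ω ℓ
            + (∑ v ∈ Finset.univ.filter (fun v : V => v ≠ p.1 ∧ v ≠ p.2),
                μ ω p v * ((if tl ℓ = v then (1:ℝ) else 0) -
                            (if hd ℓ = v then (1:ℝ) else 0)))
            + ρm p * (if hd ℓ = p.1 then (1:ℝ) else 0)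
            + ρp p * (if tl ℓ = p.2 then (1:ℝ) else 0)
            + (γ p - θ p) * (if tl ℓ = p.1 then (1:ℝ) else 0)) * y p ω ℓ
          = α ω ℓ * y p ω ℓ
            + (∑ v ∈ Finset.univ.filter (fun v : V => v ≠ p.1 ∧ v ≠ p.2),
                μ ω p v * ((if tl ℓ = v then y p ω ℓ else 0) -
                            (if hd ℓ = v then y p ω ℓ else 0)))
            + (if hd ℓ = p.1 then ρm p * y p ω ℓ else 0)
            + (if tl ℓ = p.2 then ρp p * y p ω ℓ else 0)
            + (if tl ℓ = p.1 then (γ p - θ p) * y p ω ℓ else 0) := by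
        intro ℓ _
        simp only [add_mul, Finset.sum_mul, sub_mul, mul_sub, mul_ite, ite_mul,
          mul_one, mul_zero, one_mul, zero_mul, mul_assoc]
      rw [Finset.sum_congr rfl e1]
      simp only [Finset.sum_add_distrib]
      have hμ : (∑ ℓ ∈ A ω, ∑ v ∈ Finset.univ.filter (fun v : V => v ≠ p.1 ∧ v ≠ p.2),
          μ ω p v * ((if tl ℓ = v then y p ω ℓ else 0) -
                      (if hd ℓ = v then y p ω ℓ else 0))) = 0 := by
        rw [Finset.sum_comm]
        refine Finset.sum_eq_zero fun v hv => ?_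
        simp only [Finset.mem_filter] at hv
        have hf := hflow ω p hp v hv.2.1 hv.2.2
        rw [← Finset.mul_sum, Finset.sum_sub_distrib, ← Finset.sum_filter,
          ← Finset.sum_filter, hf, sub_self, mul_zero]
      rw [hμ]
      have h2 : (∑ ℓ ∈ A ω, if hd ℓ = p.1 then ρm p * y p ω ℓ else 0)
          = ρm p * ∑ ℓ ∈ (A ω).filter (fun ℓ => hd ℓ = p.1), y p ω ℓ := by
        rw [← Finset.sum_filter, Finset.mul_sum]
      have h3 : (∑ ℓ ∈ A ω, if tl ℓ = p.2 then ρp p * y p ω ℓ else 0)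
          = ρp p * ∑ ℓ ∈ (A ω).filter (fun ℓ => tl ℓ = p.2), y p ω ℓ := by
        rw [← Finset.sum_filter, Finset.mul_sum]
      have h4 : (∑ ℓ ∈ A ω, if tl ℓ = p.1 then (γ p - θ p) * y p ω ℓ else 0)
          = (γ p - θ p) * ∑ ℓ ∈ (A ω).filter (fun ℓ => tl ℓ = p.1), y p ω ℓ := by
        rw [← Finset.sum_filter, Finset.mul_sum]
      rw [h2, h3, h4]; ring
    rw [Finset.sum_congr rfl (fun ω _ => hsplit ω)] at hS
    simp only [Finset.sum_add_distrib, ← Finset.mul_sum] at hS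
    rw [hsrcin p hp, hdstout p hp, mul_zero, mul_zero, ← hz p hp] at hS
    have hzr : z p ≤ (r p : ℝ) := (hz p hp) ▸ hbound p hp
    have hγz : γ p * z p ≤ γ p * (r p : ℝ) :=
      mul_le_mul_of_nonneg_left hzr (hγ p hp)
    nlinarith [hS, hγz]
  have hz0 : ∀ p ∈ SD2, 0 ≤ z p := fun p hp => by
    rw [hz p hp]
    exact Finset.sum_nonneg fun ω _ => Finset.sum_nonneg fun ℓ hℓ =>
      hy0 p hp ω ℓ (Finset.mem_filter.mp hℓ).1
  calc ∑ p ∈ SD2, z p ≤ ∑ p ∈ SD2, θ p * z p :=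
        Finset.sum_le_sum fun p hp => le_mul_of_one_le_left (hz0 p hp) (hθ p hp)
    _ ≤ ∑ p ∈ SD2, ((∑ ω : W, ∑ ℓ ∈ A ω, α ω ℓ * y p ω ℓ) + γ p * (r p : ℝ)) :=
        Finset.sum_le_sum key
    _ = (∑ p ∈ SD2, ∑ ω : W, ∑ ℓ ∈ A ω, α ω ℓ * y p ω ℓ)
          + ∑ p ∈ SD2, γ p * (r p : ℝ) := Finset.sum_add_distrib
    _ ≤ (∑ ω : W, ∑ ℓ ∈ A ω, α ω ℓ * (1 - ∑ p ∈ SD, x p ω ℓ))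
          + ∑ p ∈ SD2, γ p * (r p : ℝ) := by
        gcongr ?_ + _
        rw [Finset.sum_comm]
        refine Finset.sum_le_sum fun ω _ => ?_
        rw [Finset.sum_comm]
        refine Finset.sum_le_sum fun ℓ hℓ => ?_
        rw [← Finset.mul_sum]
        exact mul_le_mul_of_nonneg_left (hcap ω ℓ hℓ) (hα ω ℓ hℓ)
end
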